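/- (Hubbard–Stratonovich / intermediate field identity.) Let N ≥ 1, let M be an N×N complex matrix, and let s ∈ ℂ. Let μ be any nonzero translation-invariant measure, finite on compact sets, on the real vector space of N×N complex Hermitian matrices. Then both integrals below converge absolutely, the denominator is nonzero, and ( ∫ exp( −(1/2)·Tr(A²) + i·(s/√N)·Tr(M†AM) ) dμ(A) ) / ( ∫ exp( −(1/2)·Tr(A²) ) dμ(A) ) = exp( −(s²/(2N))·Tr(MM†MM†) ), with both integrals taken over all Hermitian A. -/

import Mathlib

open MeasureTheory
open scoped Matrix

instance matrixMeasurableSpace {m n α : Type*} [MeasurableSpace α] :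
    MeasurableSpace (Matrix m n α) :=
  inferInstanceAs (MeasurableSpace (m → n → α))

namespace HSaux
variable {N : ℕ}

lemma trace_mul_re (X Y : Matrix (Fin N) (Fin N) ℂ) (hX : Xᴴ = X) (hY : Yᴴ = Y) :
    (Matrix.trace (X * Y)) = ((Matrix.trace (X * Y)).re : ℂ) := by
  refine (Complex.conj_eq_iff_re.mp ?_).symm
  show star (Matrix.trace (X * Y)) = _
  rw [← Matrix.trace_conjTranspose, Matrix.conjTranspose_mul, hX, hY, Matrix.trace_mul_comm]

lemma trace_mul_self_eq (X : Matrix (Fin N) (Fin N) ℂ) (hX : Xᴴ = X) :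
    Matrix.trace (X * X) = ((∑ i, ∑ j, Complex.normSq (X i j) : ℝ) : ℂ) := by
  have h : ∀ i j, X j i = (starRingEnd ℂ) (X i j) := by
    intro i j
    conv_lhs => rw [← hX]
    rfl
  rw [Matrix.trace]
  push_cast
  congr 1
  ext i
  rw [Matrix.diag, Matrix.mul_apply]
  congr 1
  ext j
  rw [h i j, Complex.mul_conj]

end HSaux

namespace HSaux
variable {N : ℕ}

instance : BorelSpace (Matrix (Fin N) (Fin N) ℂ) := inferInstanceAs (BorelSpace (Fin N → Fin N → ℂ))
instance : BorelSpace (selfAdjoint (Matrix (Fin N) (Fin N) ℂ)) := Subtype.borelSpace _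
instance : ContinuousSMul ℝ (selfAdjoint (Matrix (Fin N) (Fin N) ℂ)) :=
  ⟨by
    apply Continuous.subtype_mk
    exact continuous_fst.smul (continuous_subtype_val.comp continuous_snd)⟩
instance : FiniteDimensional ℝ (selfAdjoint (Matrix (Fin N) (Fin N) ℂ)) :=
  FiniteDimensional.of_injective
    ({ toFun := fun A => (A : Matrix (Fin N) (Fin N) ℂ), map_add' := fun _ _ => rfl,
       map_smul' := fun _ _ => rfl } :
      selfAdjoint (Matrix (Fin N) (Fin N) ℂ) →ₗ[ℝ] Matrix (Fin N) (Fin N) ℂ)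
    (fun a b h => Subtype.ext h)

lemma coe_herm (A : selfAdjoint (Matrix (Fin N) (Fin N) ℂ)) :
    (A : Matrix (Fin N) (Fin N) ℂ)ᴴ = (A : Matrix (Fin N) (Fin N) ℂ) := A.2

noncomputable def core : InnerProductSpace.Core ℝ (selfAdjoint (Matrix (Fin N) (Fin N) ℂ)) where
  inner A B := (Matrix.trace ((A : Matrix (Fin N) (Fin N) ℂ) * (B : Matrix (Fin N) (Fin N) ℂ))).re
  conj_inner_symm A B := by
    simp only [starRingEnd_apply, star_trivial]
    rw [Matrix.trace_mul_comm]
  re_inner_nonneg A := by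
    simp only [RCLike.re_to_real]
    rw [trace_mul_self_eq _ (coe_herm A), Complex.ofReal_re]
    exact Finset.sum_nonneg fun i _ => Finset.sum_nonneg fun j _ => Complex.normSq_nonneg _
  add_left A B C := by
    simp only [AddSubgroup.coe_add, Matrix.add_mul, Matrix.trace_add, Complex.add_re]
  smul_left A B r := by
    simp only [selfAdjoint.val_smul, Matrix.smul_mul, Matrix.trace_smul, starRingEnd_apply,
      star_trivial]
    simp [Complex.real_smul, Complex.mul_re]
  definite A h := by
    replace h : (Matrix.trace ((A : Matrix (Fin N) (Fin N) ℂ) *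
        (A : Matrix (Fin N) (Fin N) ℂ))).re = 0 := h
    rw [trace_mul_self_eq _ (coe_herm A), Complex.ofReal_re] at h
    have : ∀ i ∈ Finset.univ, ∀ j ∈ Finset.univ,
        Complex.normSq ((A : Matrix (Fin N) (Fin N) ℂ) i j) = 0 := by
      intro i _ j _
      have := (Finset.sum_eq_zero_iff_of_nonneg (fun i _ =>
        Finset.sum_nonneg (fun j _ => Complex.normSq_nonneg _))).mp h i (Finset.mem_univ i)
      exact (Finset.sum_eq_zero_iff_of_nonneg
        (fun j _ => Complex.normSq_nonneg _)).mp this j (Finset.mem_univ j)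
    ext i j
    exact Complex.normSq_eq_zero.mp (this i (Finset.mem_univ i) j (Finset.mem_univ j))

lemma exists_iso (N : ℕ) :
    ∃ L : selfAdjoint (Matrix (Fin N) (Fin N) ℂ) ≃ₗ[ℝ]
        EuclideanSpace ℝ (Fin (Module.finrank ℝ (selfAdjoint (Matrix (Fin N) (Fin N) ℂ)))),
      ∀ A B : selfAdjoint (Matrix (Fin N) (Fin N) ℂ),
        (inner ℝ (L A) (L B) : ℝ) =
          (Matrix.trace ((A : Matrix (Fin N) (Fin N) ℂ) * (B : Matrix (Fin N) (Fin N) ℂ))).re := by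
  letI c : InnerProductSpace.Core ℝ (selfAdjoint (Matrix (Fin N) (Fin N) ℂ)) := core
  letI := c.toNormedAddCommGroup
  letI := InnerProductSpace.ofCore c.toCore
  let e := (stdOrthonormalBasis ℝ (selfAdjoint (Matrix (Fin N) (Fin N) ℂ))).repr
  refine ⟨e.toLinearEquiv, fun A B => ?_⟩
  exact (e.inner_map_map A B).trans rfl

end HSaux

open scoped RealInnerProductSpace

set_option maxHeartbeats 2000000 in
/-- **Hubbard–Stratonovich / intermediate field identity** (eq. `intermediateA`).
For any `N × N` complex matrix `M`, any `s ∈ ℂ`, and any nonzero translation-invariant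
measure `μ`, finite on compact sets, on the real vector space of Hermitian `N × N`
matrices, the normalized Gaussian average of `exp(i (s/√N) Tr(M† A M))` equals
`exp(−(s²/2N) Tr(M M† M M†))`; both integrals converge absolutely and the normalizing
integral is nonzero. -/
theorem hubbard_stratonovich (N : ℕ) (hN : 1 ≤ N)
    (M : Matrix (Fin N) (Fin N) ℂ) (s : ℂ)
    (μ : Measure (selfAdjoint (Matrix (Fin N) (Fin N) ℂ)))
    (hμ0 : μ ≠ 0)
    (hμinv : ∀ B : selfAdjoint (Matrix (Fin N) (Fin N) ℂ),
      μ.map (fun A => A + B) = μ)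
    (hμfin : ∀ K : Set (selfAdjoint (Matrix (Fin N) (Fin N) ℂ)),
      IsCompact K → μ K < ⊤) :
    Integrable (fun A : selfAdjoint (Matrix (Fin N) (Fin N) ℂ) =>
        Complex.exp (-(1/2) * Matrix.trace ((A : Matrix (Fin N) (Fin N) ℂ) *
            (A : Matrix (Fin N) (Fin N) ℂ)) +
          Complex.I * (s / (Real.sqrt N : ℂ)) *
            Matrix.trace (Mᴴ * (A : Matrix (Fin N) (Fin N) ℂ) * M))) μ ∧
    Integrable (fun A : selfAdjoint (Matrix (Fin N) (Fin N) ℂ) =>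
        Complex.exp (-(1/2) * Matrix.trace ((A : Matrix (Fin N) (Fin N) ℂ) *
          (A : Matrix (Fin N) (Fin N) ℂ)))) μ ∧
    (∫ A : selfAdjoint (Matrix (Fin N) (Fin N) ℂ),
        Complex.exp (-(1/2) * Matrix.trace ((A : Matrix (Fin N) (Fin N) ℂ) *
          (A : Matrix (Fin N) (Fin N) ℂ))) ∂μ) ≠ 0 ∧
    (∫ A : selfAdjoint (Matrix (Fin N) (Fin N) ℂ),
          Complex.exp (-(1/2) * Matrix.trace ((A : Matrix (Fin N) (Fin N) ℂ) *
              (A : Matrix (Fin N) (Fin N) ℂ)) +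
            Complex.I * (s / (Real.sqrt N : ℂ)) *
              Matrix.trace (Mᴴ * (A : Matrix (Fin N) (Fin N) ℂ) * M)) ∂μ) /
      (∫ A : selfAdjoint (Matrix (Fin N) (Fin N) ℂ),
          Complex.exp (-(1/2) * Matrix.trace ((A : Matrix (Fin N) (Fin N) ℂ) *
            (A : Matrix (Fin N) (Fin N) ℂ))) ∂μ) =
      Complex.exp (-(s^2 / (2 * (N : ℂ))) * Matrix.trace (M * Mᴴ * M * Mᴴ)) := by
  classical
  obtain ⟨L, hL⟩ := HSaux.exists_iso N
  have hLc : Continuous L := LinearMap.continuous_of_finiteDimensional L.toLinearMap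
  have hLsc : Continuous ⇑L.symm :=
    LinearMap.continuous_of_finiteDimensional L.symm.toLinearMap
  have emb : MeasurableEmbedding ⇑L :=
    Homeomorph.measurableEmbedding
      { toFun := ⇑L, invFun := ⇑L.symm, left_inv := fun x => L.symm_apply_apply x,
        right_inv := fun x => L.apply_symm_apply x,
        continuous_toFun := hLc, continuous_invFun := hLsc }
  set ν := μ.map L with hν
  haveI hνinv : ν.IsAddLeftInvariant := by
    constructor
    intro g
    have h1 : ((fun x => g + x) ∘ ⇑L) = ⇑L ∘ (fun A => A + L.symm g) := by
      funext A
      simp only [Function.comp_apply, map_add, LinearEquiv.apply_symm_apply]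
      exact add_comm _ _
    rw [hν, Measure.map_map (measurable_const_add g) hLc.measurable, h1,
      ← Measure.map_map hLc.measurable
        (continuous_add_right (L.symm g)).measurable,
      hμinv (L.symm g)]
  haveI hνfin : IsFiniteMeasureOnCompacts ν := by
    constructor
    intro K hK
    rw [hν, Measure.map_apply hLc.measurable hK.measurableSet]
    have himg : ⇑L ⁻¹' K = ⇑L.symm '' K := by
      ext x
      constructor
      · intro hx; exact ⟨L x, hx, L.symm_apply_apply x⟩
      · rintro ⟨y, hy, rfl⟩; simpa [LinearEquiv.apply_symm_apply] using hy
    rw [himg]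
    exact hμfin _ (hK.image hLsc)
  have hνuniv : ν Set.univ = μ Set.univ := by
    rw [hν, Measure.map_apply hLc.measurable MeasurableSet.univ, Set.preimage_univ]
  have hν0 : ν ≠ 0 := by
    intro h
    apply hμ0
    rw [← Measure.measure_univ_eq_zero, ← hνuniv, h]
    simp
  have hsmul : ν = Measure.addHaarScalarFactor ν volume • volume :=
    Measure.isAddLeftInvariant_eq_smul ν volume
  set c := Measure.addHaarScalarFactor ν volume with hc
  have hc0 : c ≠ 0 := by
    intro h
    rw [h, zero_smul] at hsmul
    exact hν0 hsmul
  have hcR : (0 : ℝ) < (c : ℝ) := by positivity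
  have hNC : (N : ℂ) ≠ 0 := Nat.cast_ne_zero.mpr (by omega)
  -- the Hermitian matrix C0 = M Mᴴ
  have hC : M * Mᴴ ∈ selfAdjoint (Matrix (Fin N) (Fin N) ℂ) :=
    (Matrix.isHermitian_mul_conjTranspose_self M : (M * Mᴴ)ᴴ = M * Mᴴ)
  set C0 : selfAdjoint (Matrix (Fin N) (Fin N) ℂ) := ⟨M * Mᴴ, hC⟩ with hC0
  set w := L C0 with hw
  set cc := Complex.I * (s / (Real.sqrt N : ℂ)) with hcc
  have hbre : (0:ℝ) < (1/2 : ℂ).re := by norm_num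
  -- pointwise identities
  have ha : ∀ A : selfAdjoint (Matrix (Fin N) (Fin N) ℂ),
      Matrix.trace ((A : Matrix (Fin N) (Fin N) ℂ) * (A : Matrix (Fin N) (Fin N) ℂ))
        = ((‖L A‖ : ℂ))^2 := by
    intro A
    rw [HSaux.trace_mul_re _ _ (HSaux.coe_herm A) (HSaux.coe_herm A), ← hL A A,
      real_inner_self_eq_norm_sq]
    push_cast
    ring
  have hb' : ∀ A : selfAdjoint (Matrix (Fin N) (Fin N) ℂ),
      Matrix.trace (Mᴴ * (A : Matrix (Fin N) (Fin N) ℂ) * M)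
        = ((inner ℝ w (L A) : ℝ) : ℂ) := by
    intro A
    have h1 : Matrix.trace (Mᴴ * (A : Matrix (Fin N) (Fin N) ℂ) * M)
        = Matrix.trace ((C0 : Matrix (Fin N) (Fin N) ℂ) * (A : Matrix (Fin N) (Fin N) ℂ)) := by
      rw [Matrix.trace_mul_comm, ← Matrix.mul_assoc]
    rw [h1, HSaux.trace_mul_re _ _ (HSaux.coe_herm C0) (HSaux.coe_herm A), ← hL C0 A, hw]
  have hcC : Matrix.trace (M * Mᴴ * M * Mᴴ) = ((‖w‖ : ℂ))^2 := by
    have h2 : M * Mᴴ * M * Mᴴ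
        = (C0 : Matrix (Fin N) (Fin N) ℂ) * (C0 : Matrix (Fin N) (Fin N) ℂ) := by
      rw [hC0, Matrix.mul_assoc]
    rw [h2, ha C0, hw]
  -- integral transfer
  have keyI : ∀ f : EuclideanSpace ℝ (Fin (Module.finrank ℝ
        (selfAdjoint (Matrix (Fin N) (Fin N) ℂ)))) → ℂ,
      Integrable f volume → Integrable (fun A => f (L A)) μ := by
    intro f hf
    have h3 : Integrable f ν := by
      rw [hsmul]
      exact hf.smul_measure ENNReal.coe_ne_top
    rw [hν] at h3
    exact (emb.integrable_map_iff).mp h3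
  have keyE : ∀ f : EuclideanSpace ℝ (Fin (Module.finrank ℝ
        (selfAdjoint (Matrix (Fin N) (Fin N) ℂ)))) → ℂ,
      ∫ A, f (L A) ∂μ = (c : ℝ) • ∫ v, f v ∂volume := by
    intro f
    rw [← MeasurableEmbedding.integral_map emb, ← hν, hsmul,
      integral_smul_nnreal_measure, NNReal.smul_def]
  -- pointwise equality of exponents
  have heq : ∀ A : selfAdjoint (Matrix (Fin N) (Fin N) ℂ),
      (-(1/2) * Matrix.trace ((A : Matrix (Fin N) (Fin N) ℂ) *
            (A : Matrix (Fin N) (Fin N) ℂ)) +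
          Complex.I * (s / (Real.sqrt N : ℂ)) *
            Matrix.trace (Mᴴ * (A : Matrix (Fin N) (Fin N) ℂ) * M))
        = (-(1/2 : ℂ) * ‖L A‖^2 + cc * ⟪w, L A⟫ : ℂ) := by
    intro A
    rw [ha A, hb' A, hcc]
  have heq0 : ∀ A : selfAdjoint (Matrix (Fin N) (Fin N) ℂ),
      (-(1/2) * Matrix.trace ((A : Matrix (Fin N) (Fin N) ℂ) *
            (A : Matrix (Fin N) (Fin N) ℂ)))
        = (-(1/2 : ℂ) * ‖L A‖^2 + (0:ℂ) * ⟪(0 : EuclideanSpace ℝ (Fin (Module.finrank ℝ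
            (selfAdjoint (Matrix (Fin N) (Fin N) ℂ))))), L A⟫ : ℂ) := by
    intro A
    rw [ha A]
    simp
  -- Gaussian integrability on Euclidean space
  have hGint := GaussianFourier.integrable_cexp_neg_mul_sq_norm_add_of_euclideanSpace
    (b := (1/2 : ℂ)) hbre cc w
  have hGint0 := GaussianFourier.integrable_cexp_neg_mul_sq_norm_add_of_euclideanSpace
    (b := (1/2 : ℂ)) hbre (0 : ℂ) (0 : EuclideanSpace ℝ (Fin (Module.finrank ℝ
      (selfAdjoint (Matrix (Fin N) (Fin N) ℂ)))))
  have hGval := GaussianFourier.integral_cexp_neg_mul_sq_norm_add_of_euclideanSpace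
    (b := (1/2 : ℂ)) hbre cc w
  have hGval0 := GaussianFourier.integral_cexp_neg_mul_sq_norm_add_of_euclideanSpace
    (b := (1/2 : ℂ)) hbre (0 : ℂ) (0 : EuclideanSpace ℝ (Fin (Module.finrank ℝ
      (selfAdjoint (Matrix (Fin N) (Fin N) ℂ)))))
  -- integrability of numerator and denominator
  have int1 : Integrable (fun A : selfAdjoint (Matrix (Fin N) (Fin N) ℂ) =>
      Complex.exp (-(1/2) * Matrix.trace ((A : Matrix (Fin N) (Fin N) ℂ) *
          (A : Matrix (Fin N) (Fin N) ℂ)) +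
        Complex.I * (s / (Real.sqrt N : ℂ)) *
          Matrix.trace (Mᴴ * (A : Matrix (Fin N) (Fin N) ℂ) * M))) μ := by
    have := keyI _ hGint
    exact this.congr (Filter.Eventually.of_forall fun A =>
      (congrArg Complex.exp (heq A)).symm)
  have int0 : Integrable (fun A : selfAdjoint (Matrix (Fin N) (Fin N) ℂ) =>
      Complex.exp (-(1/2) * Matrix.trace ((A : Matrix (Fin N) (Fin N) ℂ) *
        (A : Matrix (Fin N) (Fin N) ℂ)))) μ := by
    have := keyI _ hGint0
    exact this.congr (Filter.Eventually.of_forall fun A =>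
      (congrArg Complex.exp (heq0 A)).symm)
  -- values
  have val1 : (∫ A : selfAdjoint (Matrix (Fin N) (Fin N) ℂ),
        Complex.exp (-(1/2) * Matrix.trace ((A : Matrix (Fin N) (Fin N) ℂ) *
            (A : Matrix (Fin N) (Fin N) ℂ)) +
          Complex.I * (s / (Real.sqrt N : ℂ)) *
            Matrix.trace (Mᴴ * (A : Matrix (Fin N) (Fin N) ℂ) * M)) ∂μ)
      = (c : ℝ) • ((Real.pi / (1/2 : ℂ)) ^ ((Fintype.card (Fin (Module.finrank ℝ
          (selfAdjoint (Matrix (Fin N) (Fin N) ℂ)))) / 2 : ℂ) : ℂ) *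
        Complex.exp (cc ^ 2 * ‖w‖^2 / (4 * (1/2 : ℂ)))) := by
    simp only [heq]
    have hk := keyE (fun v => Complex.exp (-(1/2 : ℂ) * ‖v‖^2 + cc * ⟪w, v⟫))
    rw [hk, hGval]
  have val0 : (∫ A : selfAdjoint (Matrix (Fin N) (Fin N) ℂ),
        Complex.exp (-(1/2) * Matrix.trace ((A : Matrix (Fin N) (Fin N) ℂ) *
          (A : Matrix (Fin N) (Fin N) ℂ))) ∂μ)
      = (c : ℝ) • ((Real.pi / (1/2 : ℂ)) ^ ((Fintype.card (Fin (Module.finrank ℝ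
          (selfAdjoint (Matrix (Fin N) (Fin N) ℂ)))) / 2 : ℂ) : ℂ)) := by
    simp only [heq0]
    have hk := keyE (fun v => Complex.exp (-(1/2 : ℂ) * ‖v‖^2 + (0:ℂ) * ⟪(0 :
      EuclideanSpace ℝ (Fin (Module.finrank ℝ
        (selfAdjoint (Matrix (Fin N) (Fin N) ℂ))))), v⟫))
    rw [hk, hGval0]
    simp
  -- nonvanishing
  have hpow : ((Real.pi : ℂ) / (1/2 : ℂ)) ^ ((Fintype.card (Fin (Module.finrank ℝ
      (selfAdjoint (Matrix (Fin N) (Fin N) ℂ)))) / 2 : ℂ) : ℂ) ≠ 0 := by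
    intro h
    rcases (Complex.cpow_eq_zero_iff _ _).mp h with ⟨h1, -⟩
    rw [div_eq_mul_inv] at h1
    rcases mul_eq_zero.mp h1 with h2 | h2
    · exact Real.pi_ne_zero (by exact_mod_cast h2)
    · norm_num at h2
  have hden0 : (∫ A : selfAdjoint (Matrix (Fin N) (Fin N) ℂ),
      Complex.exp (-(1/2) * Matrix.trace ((A : Matrix (Fin N) (Fin N) ℂ) *
        (A : Matrix (Fin N) (Fin N) ℂ))) ∂μ) ≠ 0 := by
    rw [val0]
    simp only [smul_eq_mul, Complex.real_smul]
    exact mul_ne_zero (by exact_mod_cast ne_of_gt hcR) hpow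
  refine ⟨int1, int0, hden0, ?_⟩
  rw [val1, val0]
  rw [Complex.real_smul, Complex.real_smul]
  rw [mul_div_mul_left _ _ (by exact_mod_cast ne_of_gt hcR : ((c:ℝ):ℂ) ≠ 0)]
  rw [mul_comm, mul_div_assoc, div_self hpow, mul_one]
  congr 1
  rw [hcC, hcc]
  have hsq : ((Real.sqrt (N:ℝ) : ℝ) : ℂ)^2 = (N : ℂ) := by
    rw [← Complex.ofReal_pow, Real.sq_sqrt (Nat.cast_nonneg N)]
    norm_num
  field_simp
  rw [Complex.I_sq, hsq, mul_div_assoc, div_self hNC]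
  ring
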